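/- arXiv:2108.00060 — 5 statements merged into one kernel-verified Lean document; each statement's English description precedes it below -/
import Mathlib

section
/- Let ℕ^ℤ_f denote finitely supported functions ℤ → ℕ and π(α,β) := ∑_{j∈ℤ} j(α_j − β_j). Given (α,β) ∈ ℕ^ℤ_f × ℕ^ℤ_f with π(α,β) = 0, there are only finitely many triples consisting of pairs (α¹,β¹), (α²,β²) ∈ ℕ^ℤ_f × ℕ^ℤ_f with π(α¹,β¹) = 0 and π(α²,β²) = 0 and an index j ∈ ℤ such that (i) α = α¹ + α² − e_j and β = β¹ + β² − e_j, and (ii) α¹_j β²_j + α²_j β¹_j ≠ 0. -/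
open scoped BigOperators ENNReal

/-- The index set `ℕ^ℤ_f`: finitely supported functions `ℤ → ℕ`. -/
abbrev Idx : Type := ℤ →₀ ℕ

/-- Coefficient families of formal Hamiltonians. -/
abbrev Coeffs : Type := Idx → Idx → ℂ

/-- `|α| = ∑_j α_j`. -/
def wt (α : Idx) : ℕ := α.sum fun _ n => n

/-- The momentum `π(α,β) = ∑_j j (α_j - β_j)`. -/
def mom (α β : Idx) : ℤ := (α.sum fun j n => j * (n : ℤ)) - (β.sum fun j n => j * (n : ℤ))


/-- auxiliary: the momentum of a single family -/
def mm (γ : Idx) : ℤ := γ.sum fun j n => j * (n : ℤ)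

/-- auxiliary: the absolute momentum bound -/
def aa (γ : Idx) : ℤ := γ.sum fun j n => |j| * (n : ℤ)

lemma mm_add (a b : Idx) : mm (a + b) = mm a + mm b := by
  classical
  exact Finsupp.sum_add_index' (by simp) (by intro i m n; push_cast; ring)

lemma mm_single (j : ℤ) : mm (Finsupp.single j 1) = j := by
  rw [mm, Finsupp.sum_single_index (by simp)]
  ring

lemma abs_mm_le (γ : Idx) : |mm γ| ≤ aa γ := by
  classical
  refine (Finset.abs_sum_le_sum_abs _ _).trans ?_
  refine Finset.sum_le_sum fun i _ => ?_
  rw [abs_mul]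
  simp

lemma aa_mono {γ δ : Idx} (h : γ ≤ δ) : aa γ ≤ aa δ := by
  classical
  rw [aa, Finsupp.sum_of_support_subset γ (Finsupp.support_mono h) _ (by simp)]
  refine Finset.sum_le_sum fun i _ => ?_
  exact mul_le_mul_of_nonneg_left (by exact_mod_cast Finsupp.le_def.mp h i) (abs_nonneg _)

lemma le_of_partner_pos {c1 c2 γ : Idx} {j : ℤ}
    (h : c1 + c2 = γ + Finsupp.single j 1) (hj : c2 j ≠ 0) : c1 ≤ γ := by
  rw [Finsupp.le_def]
  intro i
  have h' := DFunLike.congr_fun h i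
  simp only [Finsupp.add_apply, Finsupp.single_apply] at h'
  rcases eq_or_ne j i with rfl | hij
  · simp at h'; omega
  · simp only [if_neg hij] at h'; omega

lemma sub_le_of_self_pos {c1 c2 γ : Idx} {j : ℤ}
    (h : c1 + c2 = γ + Finsupp.single j 1) : c1 - Finsupp.single j 1 ≤ γ := by
  rw [Finsupp.le_def]
  intro i
  have h' := DFunLike.congr_fun h i
  rw [Finsupp.tsub_apply]
  simp only [Finsupp.add_apply, Finsupp.single_apply] at h' ⊢
  rcases eq_or_ne j i with rfl | hij
  · simp at h' ⊢; omega
  · simp only [if_neg hij] at h' ⊢; omega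

/-- Lemma 2 of the finiteness lemma: given `(α,β)` of zero
momentum, there are only finitely many triples `((α¹,β¹),(α²,β²),j)` of
zero-momentum pairs and an index `j` with `α = α¹+α²−e_j`, `β = β¹+β²−e_j`
and `α¹_j β²_j + α²_j β¹_j ≠ 0`. -/
theorem finitely_many_bracket_triples (α β : Idx) (h : mom α β = 0) :
    {x : ((Idx × Idx) × (Idx × Idx)) × ℤ |
        mom x.1.1.1 x.1.1.2 = 0 ∧ mom x.1.2.1 x.1.2.2 = 0 ∧
        α = x.1.1.1 + x.1.2.1 - Finsupp.single x.2 1 ∧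
        β = x.1.1.2 + x.1.2.2 - Finsupp.single x.2 1 ∧
        x.1.1.1 x.2 * x.1.2.2 x.2 + x.1.2.1 x.2 * x.1.1.2 x.2 ≠ 0}.Finite := by
  classical
  apply Set.Finite.subset
    (Set.Finite.biUnion (Finset.Icc (-(aa α + aa β)) (aa α + aa β)).finite_toSet
      (fun j (_ : j ∈ _) =>
      ((((Set.finite_Iic (α + Finsupp.single j 1)).prod
          (Set.finite_Iic (β + Finsupp.single j 1))).prod
        ((Set.finite_Iic (α + Finsupp.single j 1)).prod
          (Set.finite_Iic (β + Finsupp.single j 1)))).prod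
        (Set.finite_singleton j))))
  rintro ⟨⟨⟨a1, b1⟩, a2, b2⟩, j⟩ ⟨h1, h2, hα, hβ, hne⟩
  simp only [Set.mem_setOf_eq] at *
  have hm1 : mm a1 = mm b1 := sub_eq_zero.mp h1
  have hm2 : mm a2 = mm b2 := sub_eq_zero.mp h2
  have hcase : (a1 j ≠ 0 ∧ b2 j ≠ 0) ∨ (a2 j ≠ 0 ∧ b1 j ≠ 0) := by
    by_cases h0 : a1 j * b2 j = 0
    · right
      exact mul_ne_zero_iff.mp (fun hz => hne (by simp [h0, hz]))
    · left
      exact mul_ne_zero_iff.mp h0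
  have hsa : Finsupp.single j 1 ≤ a1 + a2 := by
    rw [Finsupp.single_le_iff, Finsupp.add_apply]
    rcases hcase with ⟨h', _⟩ | ⟨h', _⟩ <;> omega
  have hsb : Finsupp.single j 1 ≤ b1 + b2 := by
    rw [Finsupp.single_le_iff, Finsupp.add_apply]
    rcases hcase with ⟨_, h'⟩ | ⟨_, h'⟩ <;> omega
  have hA : a1 + a2 = α + Finsupp.single j 1 := by
    rw [hα, tsub_add_cancel_of_le hsa]
  have hB : b1 + b2 = β + Finsupp.single j 1 := by
    rw [hβ, tsub_add_cancel_of_le hsb]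
  have hjb : |j| ≤ aa α + aa β := by
    rcases hcase with ⟨ha1j, hb2j⟩ | ⟨ha2j, hb1j⟩
    · have hb1 : b1 ≤ β := le_of_partner_pos hB hb2j
      have ha1' : a1 - Finsupp.single j 1 ≤ α := sub_le_of_self_pos hA
      have hsp : Finsupp.single j 1 ≤ a1 := Finsupp.single_le_iff.mpr (by omega)
      have hdec : mm a1 = mm (a1 - Finsupp.single j 1) + j := by
        conv_lhs => rw [← tsub_add_cancel_of_le hsp]
        rw [mm_add, mm_single]
      have hj : j = mm b1 - mm (a1 - Finsupp.single j 1) := by omega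
      rw [hj]
      calc |mm b1 - mm (a1 - Finsupp.single j 1)|
          ≤ |mm b1| + |mm (a1 - Finsupp.single j 1)| := abs_sub _ _
        _ ≤ aa β + aa α := add_le_add
            ((abs_mm_le _).trans (aa_mono hb1))
            ((abs_mm_le _).trans (aa_mono ha1'))
        _ = aa α + aa β := add_comm _ _
    · have ha1 : a1 ≤ α := le_of_partner_pos hA ha2j
      have hb1' : b1 - Finsupp.single j 1 ≤ β := sub_le_of_self_pos hB
      have hsp : Finsupp.single j 1 ≤ b1 := Finsupp.single_le_iff.mpr (by omega)
      have hdec : mm b1 = mm (b1 - Finsupp.single j 1) + j := by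
        conv_lhs => rw [← tsub_add_cancel_of_le hsp]
        rw [mm_add, mm_single]
      have hj : j = mm a1 - mm (b1 - Finsupp.single j 1) := by omega
      rw [hj]
      calc |mm a1 - mm (b1 - Finsupp.single j 1)|
          ≤ |mm a1| + |mm (b1 - Finsupp.single j 1)| := abs_sub _ _
        _ ≤ aa α + aa β := add_le_add
            ((abs_mm_le _).trans (aa_mono ha1))
            ((abs_mm_le _).trans (aa_mono hb1'))
  have hjmem : j ∈ ((Finset.Icc (-(aa α + aa β)) (aa α + aa β) : Finset ℤ) : Set ℤ) := by
    simp only [Finset.coe_Icc, Set.mem_Icc]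
    exact abs_le.mp hjb
  exact Set.mem_biUnion hjmem
    ⟨⟨⟨Set.mem_Iic.mpr (hA ▸ le_add_right le_rfl),
       Set.mem_Iic.mpr (hB ▸ le_add_right le_rfl)⟩,
      Set.mem_Iic.mpr (hA ▸ le_add_left le_rfl),
      Set.mem_Iic.mpr (hB ▸ le_add_left le_rfl)⟩, rfl⟩
end

section
/- For any two formal Hamiltonians F, G ∈ 𝓕, the Poisson bracket {F,G} is well defined: for each pair (α,β) ∈ ℕ^ℤ_f × ℕ^ℤ_f the defining double sum {F,G}_{α,β} = i ∑_{j∈ℤ} ∑ F_{α¹,β¹} G_{α²,β²} (α¹_j β²_j − β¹_j α²_j) — the inner sum running over all (α¹,β¹), (α²,β²) with π(α¹,β¹) = π(α²,β²) = 0, α = α¹+α²−e_j and β = β¹+β²−e_j — has only finitely many nonzero terms, and the resulting family {F,G} again belongs to 𝓕 (it vanishes on pairs of nonzero momentum and satisfies the reality condition). -/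
open scoped BigOperators ENNReal

/-- Membership in the space `𝓕` of formal Hamiltonians: vanishing of the
constant and linear coefficients, reality and momentum conservation. -/
def InF (H : Coeffs) : Prop :=
  H 0 0 = 0 ∧ H (Finsupp.single 0 1) 0 = 0 ∧ H 0 (Finsupp.single 0 1) = 0 ∧
    (∀ α β, H α β = (starRingEnd ℂ) (H β α)) ∧ (∀ α β, mom α β ≠ 0 → H α β = 0)

/-- A single term of the Poisson-bracket double sum `{F,G}_{α,β}`, indexed by
`x = (j, ((α¹,β¹), (α²,β²)))`: it is
`F_{α¹,β¹} G_{α²,β²} (α¹_j β²_j − β¹_j α²_j)` when `π(α¹,β¹) = π(α²,β²) = 0`,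
`α = α¹+α²−e_j` and `β = β¹+β²−e_j`, and `0` otherwise. -/
noncomputable def bracketTerm (F G : Coeffs) (α β : Idx)
    (x : ℤ × (Idx × Idx) × (Idx × Idx)) : ℂ :=
  if mom x.2.1.1 x.2.1.2 = 0 ∧ mom x.2.2.1 x.2.2.2 = 0 ∧
      α = x.2.1.1 + x.2.2.1 - Finsupp.single x.1 1 ∧
      β = x.2.1.2 + x.2.2.2 - Finsupp.single x.1 1 then
    F x.2.1.1 x.2.1.2 * G x.2.2.1 x.2.2.2 *
      ((x.2.1.1 x.1 : ℂ) * (x.2.2.2 x.1 : ℂ) - (x.2.1.2 x.1 : ℂ) * (x.2.2.1 x.1 : ℂ))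
  else 0

/-- The Poisson bracket `{F,G}`, defined coefficientwise by
`{F,G}_{α,β} = i ∑_x bracketTerm F G α β x` (a sum with finitely many
nonzero terms, so the `finsum` gives the intended value). -/
noncomputable def bracket (F G : Coeffs) : Coeffs := fun α β =>
  Complex.I * ∑ᶠ x : ℤ × (Idx × Idx) × (Idx × Idx), bracketTerm F G α β x

def momS (γ : Idx) : ℤ := γ.sum fun j n => j * (n : ℤ)

lemma mom_eq (α β : Idx) : mom α β = momS α - momS β := rfl

lemma momS_add (γ δ : Idx) : momS (γ + δ) = momS γ + momS δ :=
  Finsupp.sum_add_index' (by simp) (fun a b₁ b₂ => by push_cast; ring)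

lemma momS_single (j : ℤ) (n : ℕ) : momS (Finsupp.single j n) = j * n :=
  Finsupp.sum_single_index (by simp)

lemma wt_sum (γ : Idx) : wt γ = ∑ a ∈ γ.support, γ a := rfl

lemma apply_le_wt (γ : Idx) (j : ℤ) : γ j ≤ wt γ := by
  by_cases hj : j ∈ γ.support
  · exact Finset.single_le_sum (f := fun a => γ a) (fun _ _ => Nat.zero_le _) hj
  · simp [Finsupp.notMem_support_iff.mp hj]

lemma wt_add (γ δ : Idx) : wt (γ + δ) = wt γ + wt δ :=
  Finsupp.sum_add_index' (by simp) (fun _ _ _ => rfl)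

lemma wt_single (j : ℤ) (n : ℕ) : wt (Finsupp.single j n) = n :=
  Finsupp.sum_single_index rfl

lemma eq_zero_of_wt_zero {γ : Idx} (h : wt γ = 0) : γ = 0 := by
  ext j
  have := apply_le_wt γ j
  simp; omega

lemma two_le_wt {γ : Idx} {j j' : ℤ} (h : j ≠ j') (h1 : 1 ≤ γ j) (h2 : 1 ≤ γ j') : 2 ≤ wt γ := by
  have hsub : ({j, j'} : Finset ℤ) ⊆ γ.support := by
    intro a ha
    simp only [Finset.mem_insert, Finset.mem_singleton] at ha
    rcases ha with rfl | rfl <;> simp [Finsupp.mem_support_iff] <;> omega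
  calc 2 ≤ γ j + γ j' := by omega
    _ = ∑ a ∈ ({j, j'} : Finset ℤ), γ a := (Finset.sum_pair h).symm
    _ ≤ wt γ := by rw [wt_sum]; exact Finset.sum_le_sum_of_subset hsub

lemma eq_single_of_wt_one {γ : Idx} {j : ℤ} (h : wt γ = 1) (hj : 1 ≤ γ j) :
    γ = Finsupp.single j 1 := by
  ext j'
  rcases eq_or_ne j j' with rfl | hne
  · have := apply_le_wt γ j
    simp only [Finsupp.single_eq_same]
    omega
  · simp only [Finsupp.single_eq_of_ne' hne]
    by_contra hc
    have := two_le_wt hne hj (by omega)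
    omega

lemma exists_single_of_wt_one {γ : Idx} (h : wt γ = 1) : ∃ j, γ = Finsupp.single j 1 := by
  have hne : γ ≠ 0 := fun h0 => by simp [h0, wt] at h
  obtain ⟨j, hj⟩ := Finsupp.ne_iff.mp hne
  simp only [Finsupp.coe_zero, Pi.zero_apply] at hj
  exact ⟨j, eq_single_of_wt_one h (by omega)⟩

lemma eq_add_single {γ α : Idx} {j : ℤ} (h : α = γ - Finsupp.single j 1) (hγ : 1 ≤ γ j) :
    γ = α + Finsupp.single j 1 := by
  subst h
  ext j'
  rcases eq_or_ne j j' with rfl | hne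
  · simp [Finsupp.tsub_apply, Finsupp.single_apply]; omega
  · simp [Finsupp.tsub_apply, Finsupp.single_apply, hne]

lemma add_eq_single_decomp {γ δ : Idx} {j : ℤ} (h : γ + δ = Finsupp.single j 1)
    (hδ : 1 ≤ δ j) : γ = 0 ∧ δ = Finsupp.single j 1 := by
  have h' : ∀ j', γ j' + δ j' = (Finsupp.single j 1 : Idx) j' := fun j' => by
    rw [← Finsupp.add_apply, h]
  constructor <;> ext j' <;> have hh := h' j' <;> rcases eq_or_ne j j' with rfl | hne <;>
    [skip; skip; skip; skip] <;> first
    | (simp only [Finsupp.single_eq_same, Finsupp.coe_zero, Pi.zero_apply] at hh ⊢; omega)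
    | (simp only [Finsupp.single_eq_of_ne' hne, Finsupp.coe_zero, Pi.zero_apply] at hh ⊢; omega)


lemma term_spec {F G : Coeffs} {α β : Idx} {x : ℤ × (Idx × Idx) × (Idx × Idx)}
    (h : bracketTerm F G α β x ≠ 0) :
    mom x.2.1.1 x.2.1.2 = 0 ∧ mom x.2.2.1 x.2.2.2 = 0 ∧
    x.2.1.1 + x.2.2.1 = α + Finsupp.single x.1 1 ∧
    x.2.1.2 + x.2.2.2 = β + Finsupp.single x.1 1 ∧
    F x.2.1.1 x.2.1.2 ≠ 0 ∧ G x.2.2.1 x.2.2.2 ≠ 0 ∧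
    ((1 ≤ x.2.1.1 x.1 ∧ 1 ≤ x.2.2.2 x.1) ∨ (1 ≤ x.2.1.2 x.1 ∧ 1 ≤ x.2.2.1 x.1)) := by
  obtain ⟨j, ⟨a1, b1⟩, a2, b2⟩ := x
  unfold bracketTerm at h
  simp only at h ⊢
  split at h
  case isFalse => exact absurd rfl h
  case isTrue hc =>
    obtain ⟨h1, h2, h3, h4⟩ := hc
    have hFG := mul_ne_zero_iff.mp h
    have hF := mul_ne_zero_iff.mp hFG.1
    have hfacC : ((a1 j : ℂ) * (b2 j : ℂ) - (b1 j : ℂ) * (a2 j : ℂ)) ≠ 0 := hFG.2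
    have hfac : a1 j * b2 j ≠ b1 j * a2 j := by
      intro he
      apply hfacC
      rw [sub_eq_zero]
      exact_mod_cast congrArg (Nat.cast : ℕ → ℂ) he
    have hd : (1 ≤ a1 j ∧ 1 ≤ b2 j) ∨ (1 ≤ b1 j ∧ 1 ≤ a2 j) := by
      by_cases h0 : a1 j * b2 j = 0
      · right
        have hne : b1 j * a2 j ≠ 0 := fun he => hfac (by omega)
        have := Nat.mul_ne_zero_iff.mp hne
        omega
      · left
        have := Nat.mul_ne_zero_iff.mp h0
        omega
    have ha : 1 ≤ (a1 + a2) j := by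
      rw [Finsupp.add_apply]; omega
    have hb : 1 ≤ (b1 + b2) j := by
      rw [Finsupp.add_apply]; omega
    exact ⟨h1, h2, eq_add_single h3 ha, eq_add_single h4 hb, hF.1, hF.2, hd⟩

lemma bracket_finite (F G : Coeffs) (α β : Idx) :
    {x : ℤ × (Idx × Idx) × (Idx × Idx) | bracketTerm F G α β x ≠ 0}.Finite := by
  classical
  set T : Finset ℤ := (α.support ∪ β.support) ∪
      ((Finset.Iic α ×ˢ Finset.Iic β).image fun p => mom p.1 p.2) ∪
      ((Finset.Iic α ×ˢ Finset.Iic β).image fun p => -mom p.1 p.2) with hT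
  have hfin : (⋃ j ∈ (T : Set ℤ), ({j} : Set ℤ) ×ˢ
      (((Finset.Iic (α + Finsupp.single j 1) ×ˢ Finset.Iic (β + Finsupp.single j 1)) ×ˢ
        (Finset.Iic (α + Finsupp.single j 1) ×ˢ Finset.Iic (β + Finsupp.single j 1)) :
        Finset ((Idx × Idx) × (Idx × Idx))) : Set ((Idx × Idx) × (Idx × Idx)))).Finite := by
    refine Set.Finite.biUnion T.finite_toSet fun j _ => ?_
    exact (Set.finite_singleton j).prod (Finset.finite_toSet _)
  refine hfin.subset ?_
  rintro ⟨j, ⟨a1, b1⟩, a2, b2⟩ hx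
  obtain ⟨h1, h2, h3, h4, hFne, hGne, hd⟩ := term_spec hx
  simp only at h1 h2 h3 h4 hFne hGne hd
  have hjT : j ∈ T := by
    by_cases hjs : j ∈ α.support ∪ β.support
    · exact Finset.mem_union_left _ (Finset.mem_union_left _ hjs)
    · have hα0 : α j = 0 := by
        simp only [Finset.mem_union, Finsupp.mem_support_iff, not_or, not_not] at hjs
        exact hjs.1
      have hβ0 : β j = 0 := by
        simp only [Finset.mem_union, Finsupp.mem_support_iff, not_or, not_not] at hjs
        exact hjs.2
      have h3j : a1 j + a2 j = 1 := by
        have := congrArg (fun γ : Idx => γ j) h3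
        simpa [Finsupp.add_apply, Finsupp.single_eq_same, hα0] using this
      have h4j : b1 j + b2 j = 1 := by
        have := congrArg (fun γ : Idx => γ j) h4
        simpa [Finsupp.add_apply, Finsupp.single_eq_same, hβ0] using this
      have hle : ∀ j', j ≠ j' → a1 j' ≤ α j' ∧ b1 j' ≤ β j' := by
        intro j' hne
        have e3 := congrArg (fun γ : Idx => γ j') h3
        have e4 := congrArg (fun γ : Idx => γ j') h4
        simp only [Finsupp.add_apply, Finsupp.single_eq_of_ne' hne] at e3 e4
        omega
      rcases hd with ⟨hA1, hA2⟩ | ⟨hB1, hB2⟩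
      · -- j = -mom (a1 - e_j) b1
        have ha1j : a1 j = 1 := by omega
        have hb1j : b1 j = 0 := by omega
        have hdec : a1 = (a1 - Finsupp.single j 1) + Finsupp.single j 1 :=
          eq_add_single rfl hA1
        have hmem1 : a1 - Finsupp.single j 1 ∈ Finset.Iic α := by
          rw [Finset.mem_Iic]
          intro j'
          rcases eq_or_ne j j' with rfl | hne
          · simp [Finsupp.tsub_apply, Finsupp.single_eq_same, ha1j]
          · simp only [Finsupp.tsub_apply, Finsupp.single_eq_of_ne' hne]
            have := (hle j' hne).1
            omega
        have hmem2 : b1 ∈ Finset.Iic β := by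
          rw [Finset.mem_Iic]
          intro j'
          rcases eq_or_ne j j' with rfl | hne
          · omega
          · exact (hle j' hne).2
        have hj : j = -mom (a1 - Finsupp.single j 1) b1 := by
          have := congrArg momS hdec
          rw [momS_add, momS_single] at this
          rw [mom_eq] at h1 ⊢
          omega
        refine Finset.mem_union_right _ ?_
        rw [Finset.mem_image]
        exact ⟨(a1 - Finsupp.single j 1, b1), Finset.mem_product.mpr ⟨hmem1, hmem2⟩, hj.symm⟩
      · -- j = mom a1 (b1 - e_j)
        have hb1j : b1 j = 1 := by omega
        have ha1j : a1 j = 0 := by omega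
        have hdec : b1 = (b1 - Finsupp.single j 1) + Finsupp.single j 1 :=
          eq_add_single rfl hB1
        have hmem1 : a1 ∈ Finset.Iic α := by
          rw [Finset.mem_Iic]
          intro j'
          rcases eq_or_ne j j' with rfl | hne
          · omega
          · exact (hle j' hne).1
        have hmem2 : b1 - Finsupp.single j 1 ∈ Finset.Iic β := by
          rw [Finset.mem_Iic]
          intro j'
          rcases eq_or_ne j j' with rfl | hne
          · simp [Finsupp.tsub_apply, Finsupp.single_eq_same, hb1j]
          · simp only [Finsupp.tsub_apply, Finsupp.single_eq_of_ne' hne]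
            have := (hle j' hne).2
            omega
        have hj : j = mom a1 (b1 - Finsupp.single j 1) := by
          have := congrArg momS hdec
          rw [momS_add, momS_single] at this
          rw [mom_eq] at h1 ⊢
          omega
        refine Finset.mem_union_left _ (Finset.mem_union_right _ ?_)
        rw [Finset.mem_image]
        exact ⟨(a1, b1 - Finsupp.single j 1), Finset.mem_product.mpr ⟨hmem1, hmem2⟩, hj.symm⟩
  simp only [Set.mem_iUnion, Set.mem_prod, Set.mem_singleton_iff, Finset.coe_product,
    Finset.mem_coe, Finset.mem_Iic, Finset.coe_sort_coe]
  refine ⟨j, hjT, rfl, ?_⟩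
  have hle1 : a1 ≤ α + Finsupp.single j 1 := h3 ▸ le_add_self.trans_eq (add_comm _ _) 
  constructor
  · constructor
    · exact h3 ▸ self_le_add_right _ _
    · exact h4 ▸ self_le_add_right _ _
  · constructor
    · exact h3 ▸ le_add_self
    · exact h4 ▸ le_add_self

lemma finsum_term_eq_zero {F G : Coeffs} {α β : Idx}
    (h : ∀ x, bracketTerm F G α β x = 0) : bracket F G α β = 0 := by
  unfold bracket
  rw [finsum_congr h, finsum_zero, mul_zero]

lemma bracket_mom (F G : Coeffs) {α β : Idx} (h : mom α β ≠ 0) : bracket F G α β = 0 := by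
  refine finsum_term_eq_zero fun x => ?_
  by_contra hx
  obtain ⟨h1, h2, h3, h4, -, -, -⟩ := term_spec hx
  apply h
  have e1 := congrArg momS h3
  have e2 := congrArg momS h4
  rw [momS_add, momS_add, momS_single] at e1 e2
  rw [mom_eq] at h1 h2 ⊢
  omega

lemma term00 {F G : Coeffs} (hF : InF F) (hG : InF G)
    (x : ℤ × (Idx × Idx) × (Idx × Idx)) : bracketTerm F G 0 0 x = 0 := by
  by_contra hx
  obtain ⟨j, ⟨a1, b1⟩, a2, b2⟩ := x
  obtain ⟨h1, h2, h3, h4, hFne, hGne, hd⟩ := term_spec hx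
  simp only [zero_add] at h1 h2 h3 h4 hFne hGne hd
  rcases hd with ⟨hA1, hA2⟩ | ⟨hB1, hB2⟩
  · obtain ⟨hb1, hb2⟩ := add_eq_single_decomp h4 hA2
    obtain ⟨ha2, ha1⟩ := add_eq_single_decomp ((add_comm a1 a2) ▸ h3) hA1
    rw [ha1, hb1, mom_eq, momS_single, momS] at h1
    simp only [Finsupp.sum_zero_index, mul_one, sub_zero] at h1
    have hj : j = 0 := by simpa using h1
    subst hj
    rw [ha1, hb1] at hFne
    exact hFne hF.2.1
  · obtain ⟨ha1, ha2⟩ := add_eq_single_decomp h3 hB2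
    obtain ⟨hb2, hb1⟩ := add_eq_single_decomp ((add_comm b1 b2) ▸ h4) hB1
    rw [ha1, hb1, mom_eq, momS_single, momS] at h1
    simp only [Finsupp.sum_zero_index, mul_one, zero_sub, neg_eq_zero] at h1
    have hj : j = 0 := by simpa using h1
    subst hj
    rw [ha1, hb1] at hFne
    exact hFne hF.2.2.1

lemma H_single_left {H : Coeffs} (hH : InF H) (j : ℤ) : H (Finsupp.single j 1) 0 = 0 := by
  rcases eq_or_ne j 0 with rfl | hne
  · exact hH.2.1
  · refine hH.2.2.2.2 _ _ ?_
    rw [mom_eq, momS_single, momS]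
    simp [hne]

lemma H_single_right {H : Coeffs} (hH : InF H) (j : ℤ) : H 0 (Finsupp.single j 1) = 0 := by
  rcases eq_or_ne j 0 with rfl | hne
  · exact hH.2.2.1
  · refine hH.2.2.2.2 _ _ ?_
    rw [mom_eq, momS_single, momS]
    simp [hne]

lemma H_low {H : Coeffs} (hH : InF H) {γ : Idx} (hwt : wt γ ≤ 1) :
    H γ 0 = 0 ∧ H 0 γ = 0 := by
  interval_cases h : wt γ
  · rw [eq_zero_of_wt_zero h]
    exact ⟨hH.1, hH.1⟩
  · obtain ⟨j, rfl⟩ := exists_single_of_wt_one h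
    exact ⟨H_single_left hH j, H_single_right hH j⟩

lemma termE0 {F G : Coeffs} (hF : InF F) (hG : InF G)
    (x : ℤ × (Idx × Idx) × (Idx × Idx)) :
    bracketTerm F G (Finsupp.single 0 1) 0 x = 0 := by
  by_contra hx
  obtain ⟨j, ⟨a1, b1⟩, a2, b2⟩ := x
  obtain ⟨h1, h2, h3, h4, hFne, hGne, hd⟩ := term_spec hx
  simp only [zero_add] at h1 h2 h3 h4 hFne hGne hd
  have hwt := congrArg wt h3
  rw [wt_add, wt_add, wt_single, wt_single] at hwt
  rcases hd with ⟨hA1, hA2⟩ | ⟨hB1, hB2⟩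
  · obtain ⟨hb1, hb2⟩ := add_eq_single_decomp h4 hA2
    subst hb1
    by_cases hw : wt a1 ≤ 1
    · exact hFne (H_low hF hw).1
    · have ha2 : a2 = 0 := eq_zero_of_wt_zero (by omega)
      subst ha2; subst hb2
      rw [mom_eq, momS_single, momS] at h2
      simp only [Finsupp.sum_zero_index, mul_one, zero_sub, neg_eq_zero] at h2
      have hj : j = 0 := by simpa using h2
      subst hj
      exact hGne hG.2.2.1
  · obtain ⟨hb2, hb1⟩ := add_eq_single_decomp ((add_comm b1 b2) ▸ h4) hB1
    subst hb2
    by_cases hw : wt a2 ≤ 1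
    · exact hGne (H_low hG hw).1
    · have ha1 : a1 = 0 := eq_zero_of_wt_zero (by omega)
      subst ha1; subst hb1
      rw [mom_eq, momS_single, momS] at h1
      simp only [Finsupp.sum_zero_index, mul_one, zero_sub, neg_eq_zero] at h1
      have hj : j = 0 := by simpa using h1
      subst hj
      exact hFne hF.2.2.1

lemma term0E {F G : Coeffs} (hF : InF F) (hG : InF G)
    (x : ℤ × (Idx × Idx) × (Idx × Idx)) :
    bracketTerm F G 0 (Finsupp.single 0 1) x = 0 := by
  by_contra hx
  obtain ⟨j, ⟨a1, b1⟩, a2, b2⟩ := x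
  obtain ⟨h1, h2, h3, h4, hFne, hGne, hd⟩ := term_spec hx
  simp only [zero_add] at h1 h2 h3 h4 hFne hGne hd
  have hwt := congrArg wt h4
  rw [wt_add, wt_add, wt_single, wt_single] at hwt
  rcases hd with ⟨hA1, hA2⟩ | ⟨hB1, hB2⟩
  · obtain ⟨ha2, ha1⟩ := add_eq_single_decomp ((add_comm a1 a2) ▸ h3) hA1
    subst ha2
    by_cases hw : wt b2 ≤ 1
    · exact hGne (H_low hG hw).2
    · have hb1 : b1 = 0 := eq_zero_of_wt_zero (by omega)
      subst hb1; subst ha1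
      rw [mom_eq, momS_single, momS] at h1
      simp only [Finsupp.sum_zero_index, mul_one, sub_zero] at h1
      have hj : j = 0 := by simpa using h1
      subst hj
      exact hFne hF.2.1
  · obtain ⟨ha1, ha2⟩ := add_eq_single_decomp h3 hB2
    subst ha1
    by_cases hw : wt b1 ≤ 1
    · exact hFne (H_low hF hw).2
    · have hb2 : b2 = 0 := eq_zero_of_wt_zero (by omega)
      subst hb2; subst ha2
      rw [mom_eq, momS_single, momS] at h2
      simp only [Finsupp.sum_zero_index, mul_one, sub_zero] at h2
      have hj : j = 0 := by simpa using h2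
      subst hj
      exact hGne hG.2.1

def swapE : (ℤ × (Idx × Idx) × (Idx × Idx)) ≃ (ℤ × (Idx × Idx) × (Idx × Idx)) :=
  (Equiv.refl ℤ).prodCongr ((Equiv.prodComm Idx Idx).prodCongr (Equiv.prodComm Idx Idx))

lemma mom_swap (a b : Idx) : mom a b = -mom b a := by
  unfold mom; ring

lemma term_swap {F G : Coeffs} (hFr : ∀ a b, F a b = (starRingEnd ℂ) (F b a))
    (hGr : ∀ a b, G a b = (starRingEnd ℂ) (G b a)) (α β : Idx)
    (x : ℤ × (Idx × Idx) × (Idx × Idx)) :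
    bracketTerm F G α β (swapE x) = -((starRingEnd ℂ) (bracketTerm F G β α x)) := by
  obtain ⟨j, ⟨a1, b1⟩, a2, b2⟩ := x
  show bracketTerm F G α β (j, (b1, a1), (b2, a2)) = _
  unfold bracketTerm
  simp only
  by_cases hc : mom a1 b1 = 0 ∧ mom a2 b2 = 0 ∧ β = a1 + a2 - Finsupp.single j 1 ∧
      α = b1 + b2 - Finsupp.single j 1
  · rw [if_pos ⟨by rw [mom_swap]; simp [hc.1], by rw [mom_swap]; simp [hc.2.1],
      hc.2.2.2, hc.2.2.1⟩, if_pos hc]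
    rw [hFr b1 a1, hGr b2 a2]
    simp only [map_mul, map_sub, Complex.conj_natCast]
    ring
  · rw [if_neg ?_, if_neg hc, map_zero, neg_zero]
    intro hcon
    exact hc ⟨by rw [mom_swap]; simp [hcon.1], by rw [mom_swap]; simp [hcon.2.1],
      hcon.2.2.2, hcon.2.2.1⟩

lemma bracket_real {F G : Coeffs} (hF : InF F) (hG : InF G) (α β : Idx) :
    bracket F G α β = (starRingEnd ℂ) (bracket F G β α) := by
  have hfin : (Function.support (bracketTerm F G β α)).Finite := bracket_finite F G β α
  unfold bracket
  rw [map_mul, Complex.conj_I]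
  have h1 : (∑ᶠ x, bracketTerm F G α β x) = ∑ᶠ x, bracketTerm F G α β (swapE x) :=
    (finsum_comp_equiv swapE).symm
  rw [h1, finsum_congr (term_swap hF.2.2.2.1 hG.2.2.2.1 α β), finsum_neg_distrib]
  have h2 := AddMonoidHom.map_finsum (starRingEnd ℂ).toAddMonoidHom hfin
  simp only [RingHom.toAddMonoidHom_eq_coe, AddMonoidHom.coe_coe] at h2
  rw [← h2]
  ring

/-- the Poisson bracket of two formal Hamiltonians is well
defined — each coefficient is a sum with finitely many nonzero terms — and
the resulting family again belongs to `𝓕`. -/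
theorem bracket_well_defined (F G : Coeffs) (hF : InF F) (hG : InF G) :
    (∀ α β : Idx,
        {x : ℤ × (Idx × Idx) × (Idx × Idx) | bracketTerm F G α β x ≠ 0}.Finite) ∧
      InF (bracket F G) := by
  refine ⟨fun α β => bracket_finite F G α β,
    finsum_term_eq_zero (term00 hF hG),
    finsum_term_eq_zero (termE0 hF hG),
    finsum_term_eq_zero (term0E hF hG),
    fun α β => bracket_real hF hG α β,
    fun α β h => bracket_mom F G h⟩
end

section
/- Fix 0 < θ < 1. Let α, β ∈ ℕ^ℤ_f with ∑_i i(α_i − β_i) = 0 and |α| + |β| ≥ 2, and let n̂ = n̂(α+β) = (n̂_1 ≥ n̂_2 ≥ … ≥ n̂_N), N = |α|+|β|, be the decreasing rearrangement associated to α+β. Then ∑_{i∈ℤ} ⟨i⟩^θ (α_i + β_i) = ∑_{l=1}^N n̂_l^θ ≥ 2 n̂_1^θ + (2 − 2^θ) ∑_{l≥3} n̂_l^θ. -/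
open scoped BigOperators ENNReal

/-- `⟨j⟩ = max(|j|,1)` as a real number. -/
def zbr (j : ℤ) : ℝ := ((max j.natAbs 1 : ℕ) : ℝ)

/-- The multiset `n̂(v)`: `⟨h⟩` repeated `v_h` times for each `h ∈ ℤ`. -/
noncomputable def nhat (v : Idx) : Multiset ℕ := v.toMultiset.map fun h => max h.natAbs 1

/-- The decreasing rearrangement `n̂_1 ≥ n̂_2 ≥ … ≥ n̂_N` of `n̂(v)`, as a list
(`n̂_l` is the `(l-1)`-th entry of this list). -/
noncomputable def nhatList (v : Idx) : List ℕ := ((nhat v).sort (· ≤ ·)).reverse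

lemma keyA (θ : ℝ) (hθ0 : 0 < θ) (hθ1 : θ < 1) {t : ℝ} (ht : 1 ≤ t) :
    (t + 1) ^ θ ≤ t ^ θ + ((2:ℝ) ^ θ - 1) := by
  have ht0 : 0 < t := lt_of_lt_of_le one_pos ht
  have hcc := Real.concaveOn_rpow hθ0.le hθ1.le
  have hmem1 : (t + 1 : ℝ) ∈ Set.Ici (0:ℝ) := by simp; linarith
  have hmem2 : (1 : ℝ) ∈ Set.Ici (0:ℝ) := by norm_num
  have hl : (0:ℝ) ≤ (t - 1) / t := div_nonneg (by linarith) ht0.le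
  have hm : (0:ℝ) ≤ 1 / t := by positivity
  have hab : (t - 1) / t + 1 / t = 1 := by field_simp; ring
  have h1 := hcc.2 hmem1 hmem2 hl hm hab
  have h2 := hcc.2 hmem1 hmem2 hm hl (by linarith)
  simp only [smul_eq_mul, Real.one_rpow] at h1 h2
  have e1 : (t - 1) / t * (t + 1) + 1 / t * 1 = t := by field_simp; ring
  have e2 : 1 / t * (t + 1) + (t - 1) / t * 1 = 2 := by field_simp; ring
  rw [e1] at h1
  rw [e2] at h2
  have hc : ((t - 1) / t + 1 / t) * (t + 1) ^ θ = (t + 1) ^ θ := by rw [hab]; ring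
  nlinarith [h1, h2, hc]

lemma keyB (θ : ℝ) (hθ0 : 0 < θ) (hθ1 : θ < 1) {c x : ℝ} (hx : 0 ≤ x) (hxc : x ≤ c) :
    (c + x) ^ θ ≤ c ^ θ + ((2:ℝ) ^ θ - 1) * x ^ θ := by
  rcases eq_or_lt_of_le hx with h0 | hx0
  · rw [← h0, add_zero, Real.zero_rpow hθ0.ne', mul_zero, add_zero]
  · have hc0 : 0 < c := lt_of_lt_of_le hx0 hxc
    have ht : 1 ≤ c / x := (one_le_div hx0).2 hxc
    have h := keyA θ hθ0 hθ1 ht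
    have e : c + x = x * (c / x + 1) := by field_simp
    have e2 : c = x * (c / x) := by field_simp
    calc (c + x) ^ θ = x ^ θ * (c / x + 1) ^ θ := by
          rw [e, Real.mul_rpow hx (by positivity)]
      _ ≤ x ^ θ * ((c / x) ^ θ + ((2:ℝ) ^ θ - 1)) := by
          apply mul_le_mul_of_nonneg_left h (Real.rpow_nonneg hx θ)
      _ = x ^ θ * (c / x) ^ θ + ((2:ℝ) ^ θ - 1) * x ^ θ := by ring
      _ = c ^ θ + ((2:ℝ) ^ θ - 1) * x ^ θ := by
          rw [← Real.mul_rpow hx (by positivity), ← e2]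

lemma keyC (θ : ℝ) (hθ0 : 0 < θ) (hθ1 : θ < 1) {b : ℝ} :
    ∀ (r : List ℝ), (∀ x ∈ r, 0 ≤ x ∧ x ≤ b) →
    (b + r.sum) ^ θ ≤ b ^ θ + ((2:ℝ) ^ θ - 1) * (r.map (fun x => x ^ θ)).sum := by
  intro r
  induction r with
  | nil => simp
  | cons x r ih =>
    intro hall
    have hx := hall x (by simp)
    have hr : ∀ y ∈ r, 0 ≤ y ∧ y ≤ b := fun y hy => hall y (by simp [hy])
    have hs0 : 0 ≤ r.sum := List.sum_nonneg (fun y hy => (hr y hy).1)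
    have step : (b + (x :: r).sum) ^ θ ≤ (b + r.sum) ^ θ + ((2:ℝ)^θ - 1) * x ^ θ := by
      have : b + (x :: r).sum = (b + r.sum) + x := by simp [List.sum_cons]; ring
      rw [this]
      exact keyB θ hθ0 hθ1 hx.1 (le_trans hx.2 (by linarith))
    calc (b + (x :: r).sum) ^ θ ≤ (b + r.sum) ^ θ + ((2:ℝ)^θ - 1) * x ^ θ := step
      _ ≤ b ^ θ + ((2:ℝ)^θ - 1) * (r.map (fun x => x ^ θ)).sum + ((2:ℝ)^θ - 1) * x ^ θ := by
          linarith [ih hr]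
      _ = b ^ θ + ((2:ℝ)^θ - 1) * ((x :: r).map (fun x => x ^ θ)).sum := by
          simp [List.sum_cons]; ring

lemma sum_map_toMultiset {M : Type*} [AddCommMonoid M] (f : ℤ →₀ ℕ) (F : ℤ → M) :
    (f.toMultiset.map F).sum = f.sum fun a n => n • F a := by
  refine f.induction ?_ ?_
  · simp
  · intro a n g ha hn ih
    rw [Finsupp.toMultiset_add, Multiset.map_add, Multiset.sum_add, ih,
      Finsupp.sum_add_index' (h := fun a n => n • F a) (by simp)
        (fun a b₁ b₂ => add_smul b₁ b₂ (F a)),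
      Finsupp.toMultiset_single, Finsupp.sum_single_index (by simp)]
    rw [Multiset.map_nsmul, Multiset.map_singleton, Multiset.sum_nsmul, Multiset.sum_singleton]

lemma toMultiset_sum_eq (f : ℤ →₀ ℕ) :
    f.toMultiset.sum = f.sum fun a n => a * (n : ℤ) := by
  have := sum_map_toMultiset f (fun a => a)
  rw [Multiset.map_id'] at this
  rw [this]
  apply Finsupp.sum_congr
  intro a _
  rw [nsmul_eq_mul, mul_comm]

-- the one-sided momentum bound
lemma abs_le_erase_sum {h : ℤ} (s t : Multiset ℤ) (hs : h ∈ s) (hst : s.sum = t.sum) :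
    |h| ≤ (((s + t).erase h).map (fun k => |k|)).sum := by
  have he : (s + t).erase h = s.erase h + t := Multiset.erase_add_left_pos t hs
  have hsum : s.sum = h + (s.erase h).sum := by
    conv_lhs => rw [← Multiset.cons_erase hs]
    rw [Multiset.sum_cons]
  have hh : h = t.sum - (s.erase h).sum := by omega
  calc |h| = |t.sum - (s.erase h).sum| := by rw [← hh]
    _ ≤ |t.sum| + |(s.erase h).sum| := abs_sub t.sum ((s.erase h).sum)
    _ ≤ (t.map (fun k => |k|)).sum + ((s.erase h).map (fun k => |k|)).sum := by
        gcongr <;> exact Multiset.abs_sum_le_sum_abs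
    _ = (((s + t).erase h).map (fun k => |k|)).sum := by
        rw [he, Multiset.map_add, Multiset.sum_add]; ring

lemma coe_map_rpow_eq (l : List ℕ) (θ : ℝ) :
    (l.map fun n => (n : ℝ) ^ θ) = l.map (fun n : ℕ => (n : ℝ) ^ θ) := by
  show List.map _ (do let a ← l; pure ((a : ℝ))) = _
  have h : (do let a ← l; pure ((a:ℝ)) : List ℝ) = List.map (fun n : ℕ => (n:ℝ)) l := by
    induction l with
    | nil => rfl
    | cons x l ih => simp_all [List.flatMap_cons]
  rw [h, List.map_map]
  rfl

/-- Lemma `constance generalbis`: under momentum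
conservation, `∑_i ⟨i⟩^θ (α_i+β_i) = ∑_l n̂_l^θ ≥ 2 n̂_1^θ + (2−2^θ) ∑_{l≥3}
n̂_l^θ`. -/
theorem gevrey_weight_inequality (θ : ℝ) (hθ0 : 0 < θ) (hθ1 : θ < 1)
    (α β : Idx) (hmom : mom α β = 0) (hN : 2 ≤ wt α + wt β) :
    (∑ᶠ i : ℤ, zbr i ^ θ * ((α i + β i : ℕ) : ℝ)) =
        ((nhatList (α + β)).map fun n => (n : ℝ) ^ θ).sum ∧
      2 * ((nhatList (α + β)).headI : ℝ) ^ θ +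
          (2 - (2 : ℝ) ^ θ) *
            (((nhatList (α + β)).drop 2).map fun n => (n : ℝ) ^ θ).sum ≤
        ((nhatList (α + β)).map fun n => (n : ℝ) ^ θ).sum := by
  classical
  rw [coe_map_rpow_eq, coe_map_rpow_eq]
  set v : Idx := α + β with hv
  have hmul : ((nhatList v : List ℕ) : Multiset ℕ) = nhat v := by
    rw [nhatList, Multiset.coe_reverse, Multiset.sort_eq]
  have hcard : Multiset.card (nhat v) = wt α + wt β := by
    rw [nhat, Multiset.card_map, Finsupp.card_toMultiset, hv]
    rw [wt, wt, ← Finsupp.sum_add_index' (h := fun _ n => n) (fun _ => rfl) (fun _ _ _ => rfl)]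
    rfl
  have hlen : (nhatList v).length = wt α + wt β := by
    rw [← hcard, ← hmul, Multiset.coe_card]
  have h2 : 2 ≤ (nhatList v).length := by rw [hlen]; exact hN
  obtain ⟨a, t, hat⟩ : ∃ a t, nhatList v = a :: t := by
    cases hE : nhatList v with
    | nil => rw [hE] at h2; simp at h2
    | cons a t => exact ⟨a, t, rfl⟩
  obtain ⟨b, rest, hbt⟩ : ∃ b rest, t = b :: rest := by
    cases hE : t with
    | nil => rw [hat, hE] at h2; simp at h2
    | cons b r => exact ⟨b, r, rfl⟩
  have hL : nhatList v = a :: b :: rest := by rw [hat, hbt]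
  have hsorted : (nhatList v).Pairwise (fun x y => y ≤ x) := by
    rw [nhatList]
    exact List.pairwise_reverse.2 (Multiset.pairwise_sort (nhat v) (· ≤ ·))
  rw [hL] at hsorted
  have hba : b ≤ a := (List.pairwise_cons.1 hsorted).1 b (by simp)
  have hrb : ∀ x ∈ rest, x ≤ b :=
    (List.pairwise_cons.1 (List.pairwise_cons.1 hsorted).2).1
  have hmul2 : nhat v = a ::ₘ b ::ₘ (rest : Multiset ℕ) := by
    rw [← hmul, hL]; rfl
  have hnsum : (nhat v).sum = a + (b + rest.sum) := by
    rw [hmul2, Multiset.sum_cons, Multiset.sum_cons, Multiset.sum_coe]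
  obtain ⟨h, hhm, hha⟩ : ∃ h ∈ v.toMultiset, max h.natAbs 1 = a := by
    have : a ∈ nhat v := by rw [hmul2]; exact Multiset.mem_cons_self _ _
    rw [nhat] at this
    exact Multiset.mem_map.1 this
  have hsumeq : (Finsupp.toMultiset α).sum = (Finsupp.toMultiset β).sum := by
    rw [toMultiset_sum_eq, toMultiset_sum_eq]
    rw [mom] at hmom
    omega
  have hvm : v.toMultiset = Finsupp.toMultiset α + Finsupp.toMultiset β := by
    rw [hv, Finsupp.toMultiset_add]
  have hcv : Multiset.card v.toMultiset = wt α + wt β := by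
    rw [← hcard, nhat, Multiset.card_map]
  set S : ℕ := ((v.toMultiset.erase h).map (fun k => max k.natAbs 1)).sum with hSdef
  have hS : (nhat v).sum = a + S := by
    rw [hSdef, nhat]
    conv_lhs => rw [← Multiset.cons_erase hhm]
    rw [Multiset.map_cons, Multiset.sum_cons, hha]
  have hkey : a ≤ b + rest.sum := by
    have habs : |h| ≤ ((v.toMultiset.erase h).map (fun k => |k|)).sum := by
      rw [hvm] at hhm ⊢
      rcases Multiset.mem_add.1 hhm with hmem | hmem
      · exact abs_le_erase_sum _ _ hmem hsumeq
      · have := abs_le_erase_sum _ _ hmem hsumeq.symm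
        rwa [add_comm (Finsupp.toMultiset β) (Finsupp.toMultiset α)] at this
    have hstep : a ≤ S := by
      by_cases h0 : h = 0
      · have ha1 : a = 1 := by rw [← hha, h0]; rfl
        have hcard' : 0 < Multiset.card
            ((v.toMultiset.erase h).map (fun k => max k.natAbs 1)) := by
          rw [Multiset.card_map, Multiset.card_erase_of_mem hhm, Nat.pred_eq_sub_one]
          omega
        obtain ⟨y, hy⟩ := Multiset.card_pos_iff_exists_mem.1 hcard'
        have hy1 : 1 ≤ y := by
          obtain ⟨k, _, rfl⟩ := Multiset.mem_map.1 hy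
          exact le_max_right _ _
        have hyS : y ≤ S := by
          rw [hSdef]
          exact Multiset.single_le_sum (fun x _ => Nat.zero_le x) y hy
        omega
      · have haeq : (a : ℤ) = |h| := by
          rw [← hha]
          have hna : h.natAbs ≠ 0 := fun hc => h0 (Int.natAbs_eq_zero.1 hc)
          rw [max_eq_left (by omega)]
          exact (Int.abs_eq_natAbs h).symm
        have hle2 : ((v.toMultiset.erase h).map (fun k => |k|)).sum
            ≤ ((v.toMultiset.erase h).map (fun k => ((max k.natAbs 1 : ℕ) : ℤ))).sum :=
          Multiset.sum_map_le_sum_map _ _ (fun k _ => by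
            rw [Int.abs_eq_natAbs]
            exact_mod_cast Nat.le_max_left _ _)
        have hcast : ((S : ℕ) : ℤ)
            = ((v.toMultiset.erase h).map (fun k => ((max k.natAbs 1 : ℕ) : ℤ))).sum := by
          rw [hSdef, Nat.cast_multiset_sum, Multiset.map_map]
          rfl
        have hfin2 : (a : ℤ) ≤ ((S : ℕ) : ℤ) := by
          rw [haeq, hcast]; exact le_trans habs hle2
        exact_mod_cast hfin2
    have hSval : a + S = a + (b + rest.sum) := by rw [← hS, hnsum]
    omega
  have hg_eq : ((nhat v).map (fun n : ℕ => (n : ℝ) ^ θ)).sum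
      = ((nhatList v).map (fun n : ℕ => (n : ℝ) ^ θ)).sum := by
    rw [← hmul, Multiset.map_coe, Multiset.sum_coe]
  have hfin : (∑ᶠ i : ℤ, zbr i ^ θ * ((α i + β i : ℕ) : ℝ))
      = ((nhat v).map (fun n : ℕ => (n : ℝ) ^ θ)).sum := by
    have hms : ((nhat v).map (fun n : ℕ => (n : ℝ) ^ θ)).sum
        = v.sum fun i n => n • (((max i.natAbs 1 : ℕ) : ℝ) ^ θ) := by
      rw [nhat, Multiset.map_map]
      exact sum_map_toMultiset v _
    have hsub : (Function.support fun i : ℤ => zbr i ^ θ * ((α i + β i : ℕ) : ℝ))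
        ⊆ ↑v.support := by
      intro i hi
      simp only [Function.mem_support] at hi
      simp only [Finset.mem_coe, Finsupp.mem_support_iff]
      intro hvi
      apply hi
      have hvi' : v i = α i + β i := Finsupp.add_apply α β i
      have hab0 : α i + β i = 0 := by omega
      rw [hab0]
      simp
    rw [hms, Finsupp.sum, finsum_eq_sum_of_support_subset _ hsub]
    apply Finset.sum_congr rfl
    intro i _
    have hvi : v i = α i + β i := Finsupp.add_apply α β i
    rw [nsmul_eq_mul, mul_comm, hvi]
    rfl
  constructor
  · rw [← hg_eq]; exact hfin
  · rw [hL]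
    simp only [List.headI, List.drop_succ_cons, List.drop_zero, List.map_cons, List.sum_cons]
    set T : ℝ := (rest.map (fun n : ℕ => (n : ℝ) ^ θ)).sum with hT
    have hrestR : ∀ x ∈ rest.map (fun n : ℕ => (n : ℝ)), 0 ≤ x ∧ x ≤ (b : ℝ) := by
      intro x hx
      obtain ⟨n, hn, rfl⟩ := List.mem_map.1 hx
      exact ⟨Nat.cast_nonneg n, Nat.cast_le.2 (hrb n hn)⟩
    have hkC := keyC θ hθ0 hθ1 (rest.map (fun n : ℕ => (n : ℝ))) hrestR
    have hmapmap : ((rest.map (fun n : ℕ => (n : ℝ))).map (fun x => x ^ θ)).sum = T := by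
      rw [hT, List.map_map]
      rfl
    have hsumcast : ((rest.sum : ℕ) : ℝ) = (rest.map (fun n : ℕ => (n : ℝ))).sum := by
      rw [Nat.cast_list_sum]
    have hA : (a : ℝ) ≤ (b : ℝ) + (rest.map (fun n : ℕ => (n : ℝ))).sum := by
      rw [← hsumcast]
      exact_mod_cast hkey
    have hmono : (a : ℝ) ^ θ ≤ ((b : ℝ) + (rest.map (fun n : ℕ => (n : ℝ))).sum) ^ θ :=
      Real.rpow_le_rpow (Nat.cast_nonneg a) hA hθ0.le
    rw [hmapmap] at hkC
    have hfinal : (a : ℝ) ^ θ ≤ (b : ℝ) ^ θ + ((2 : ℝ) ^ θ - 1) * T := le_trans hmono hkC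
    nlinarith [hfinal]
end

section
/- Let g : ℤ → ℝ be nonnegative, even, and nondecreasing on ℕ. Let α ≠ β ∈ ℕ^ℤ_f with α_j ≠ β_j for some j ≠ 0, let m = m(α−β) = (m_1,…,m_D) and n̂ = n̂(α+β) = (n̂_1,…,n̂_N). Then ∑_{i∈ℤ} g(i) |α_i − β_i| ≤ 2 g(m_1) + ∑_{l≥3} g(n̂_l). -/
open scoped BigOperators ENNReal

/-- `α - β` as an integer-valued finitely supported function. -/
noncomputable def zdiff (α β : Idx) : ℤ →₀ ℤ :=
  (Finsupp.mapRange (fun n : ℕ => (n : ℤ)) rfl α) -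
    (Finsupp.mapRange (fun n : ℕ => (n : ℤ)) rfl β)

/-- The multiset `m(u)`: each `j ≠ 0` repeated `|u_j|` times. -/
noncomputable def mMultiset (u : ℤ →₀ ℤ) : Multiset ℤ :=
  (Finsupp.erase 0 (Finsupp.mapRange Int.natAbs Int.natAbs_zero u)).toMultiset

/-- `D = D(u)`, the cardinality of `m(u)`. -/
noncomputable def Dcard (u : ℤ →₀ ℤ) : ℕ := Multiset.card (mMultiset u)

/-- `|m_1|`: the largest absolute value of an entry of `m(u)` (so that
`m_1 = ± m1abs u`). -/
noncomputable def m1abs (u : ℤ →₀ ℤ) : ℕ := ((mMultiset u).map Int.natAbs).sup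


lemma msum_toMultiset (f : ℤ →₀ ℕ) (F : ℤ → ℝ) :
    ((Finsupp.toMultiset f).map F).sum = ∑ a ∈ f.support, (f a : ℝ) * F a := by
  classical
  rw [Finsupp.toMultiset_map, Finsupp.sum_toMultiset,
    Finsupp.sum_mapDomain_index (by simp) (by intros; rw [add_smul])]
  simp [Finsupp.sum, nsmul_eq_mul]

lemma key (G : ℕ → ℝ) (hG0 : ∀ n, 0 ≤ G n) (hGmono : Monotone G)
    (S T : Multiset ℕ) (hST : S ≤ T) (M1 : ℕ) (hS : ∀ x ∈ S, x ≤ M1) :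
    (S.map G).sum ≤ 2 * G M1 + (((T.sort (· ≤ ·)).reverse.drop 2).map G).sum := by
  classical
  set t : List ℕ := (T.sort (· ≤ ·)).reverse with ht_def
  have ht : (t : Multiset ℕ) = T := by
    rw [ht_def, Multiset.coe_reverse, Multiset.sort_eq]
  set P : Multiset ℕ := ↑(t.take 2) with hP_def
  have hPt : P ≤ T := by
    rw [← ht]
    exact (List.take_sublist 2 t).subperm
  set R : Multiset ℕ := T - S with hR_def
  have hTR : T = S + R := by rw [hR_def, add_comm]; exact (tsub_add_cancel_of_le hST).symm
  set P₂ : Multiset ℕ := P - S with hP2_def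
  have hP2R : P₂ ≤ R := tsub_le_tsub_right hPt S
  set P₁ : Multiset ℕ := P - P₂ with hP1_def
  have hP1S : P₁ ≤ S := by
    rw [hP1_def, tsub_le_iff_right, add_comm]
    exact le_tsub_add
  have hP12 : P₁ + P₂ = P := tsub_add_cancel_of_le tsub_le_self
  have hcard : Multiset.card P₁ ≤ 2 := by
    calc Multiset.card P₁ ≤ Multiset.card P := Multiset.card_le_card tsub_le_self
    _ ≤ 2 := by rw [hP_def]; simp
  have h1 : (P₁.map G).sum ≤ 2 * G M1 := by
    have hb := Multiset.sum_le_card_nsmul (P₁.map G) (G M1) (by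
      intro x hx
      obtain ⟨y, hy, rfl⟩ := Multiset.mem_map.1 hx
      exact hGmono (hS y (Multiset.mem_of_le hP1S hy)))
    calc (P₁.map G).sum ≤ Multiset.card (P₁.map G) • G M1 := hb
    _ = (Multiset.card P₁ : ℝ) * G M1 := by rw [Multiset.card_map, nsmul_eq_mul]
    _ ≤ 2 * G M1 := by
        apply mul_le_mul_of_nonneg_right _ (hG0 M1)
        exact_mod_cast hcard
  have h2 : (P₂.map G).sum ≤ (R.map G).sum := by
    obtain ⟨Q, hQ⟩ := Multiset.le_iff_exists_add.1 (Multiset.map_le_map (f := G) hP2R)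
    rw [hQ, Multiset.sum_add]
    have hQ0 : 0 ≤ Q.sum := Multiset.sum_nonneg (by
      intro x hx
      have hx' : x ∈ R.map G := by rw [hQ]; exact Multiset.mem_add.2 (Or.inr hx)
      obtain ⟨y, _, rfl⟩ := Multiset.mem_map.1 hx'
      exact hG0 y)
    linarith
  have hsplit : (T.map G).sum = (P.map G).sum + ((t.drop 2).map G).sum := by
    conv_lhs => rw [← ht, ← List.take_append_drop 2 t]
    rw [hP_def]
    simp [Multiset.map_coe, Multiset.sum_coe]
  have hTsum : (T.map G).sum = (S.map G).sum + (R.map G).sum := by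
    rw [hTR, Multiset.map_add, Multiset.sum_add]
  have hPsum : (P.map G).sum = (P₁.map G).sum + (P₂.map G).sum := by
    rw [← hP12, Multiset.map_add, Multiset.sum_add]
  linarith

/-- Lemma `mizza`: for `g` nonnegative, even and
nondecreasing on `ℕ`, and `α ≠ β` differing at some `j ≠ 0`,
`∑_i g(i)|α_i − β_i| ≤ 2 g(m_1) + ∑_{l≥3} g(n̂_l)` (by evenness
`g(m_1) = g(|m_1|)`). -/
theorem weight_sum_estimate (g : ℤ → ℝ) (hg0 : ∀ i, 0 ≤ g i)
    (hgeven : ∀ i, g (-i) = g i)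
    (hgmono : ∀ m n : ℕ, m ≤ n → g (m : ℤ) ≤ g (n : ℤ))
    (α β : Idx) (hne : ∃ j : ℤ, j ≠ 0 ∧ α j ≠ β j) :
    (∑ᶠ i : ℤ, g i * |(α i : ℝ) - (β i : ℝ)|) ≤
      2 * g ((m1abs (zdiff α β) : ℕ) : ℤ) +
        (((nhatList (α + β)).drop 2).map fun n => g ((n : ℕ) : ℤ)).sum := by
  classical
  set u : ℤ →₀ ℤ := zdiff α β with hu_def
  set w : ℤ →₀ ℕ := Finsupp.mapRange Int.natAbs Int.natAbs_zero u with hw_def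
  have hws : ∀ i, w i = ((α i : ℤ) - (β i : ℤ)).natAbs := by
    intro i
    simp [hw_def, hu_def, zdiff, Finsupp.mapRange_apply]
  set G : ℕ → ℝ := fun n => g (n : ℤ) with hG_def
  set M1 : ℕ := m1abs u with hM1_def
  -- g i = g |i|
  have hgabs : ∀ i : ℤ, g i = g (i.natAbs : ℤ) := by
    intro i
    rcases Int.natAbs_eq i with h | h
    · rw [← h]
    · calc g i = g (-(i.natAbs : ℤ)) := by rw [← h]
        _ = g ((i.natAbs : ℤ)) := hgeven _
  -- step 1: finsum to finset sum
  have h0 : (∑ᶠ i : ℤ, g i * |(α i : ℝ) - (β i : ℝ)|) =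
      ∑ i ∈ w.support, g i * |(α i : ℝ) - (β i : ℝ)| := by
    apply finsum_eq_sum_of_support_subset
    intro i hi
    simp only [Function.mem_support] at hi
    simp only [Finset.coe_sort_coe, Finset.mem_coe, Finsupp.mem_support_iff, hws]
    intro hcon
    apply hi
    have : (α i : ℤ) = (β i : ℤ) := by omega
    have : (α i : ℝ) = (β i : ℝ) := by exact_mod_cast congrArg (Int.cast : ℤ → ℝ) this
    rw [this]
    simp
  -- abs as natAbs cast
  have habs : ∀ i, |(α i : ℝ) - (β i : ℝ)| = (w i : ℝ) := by
    intro i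
    rw [hws]
    push_cast [Nat.cast_natAbs]
    push_cast
    ring_nf
  -- step 2: pointwise bound
  have h1 : ∑ i ∈ w.support, g i * |(α i : ℝ) - (β i : ℝ)| ≤
      ∑ i ∈ w.support, (w i : ℝ) * G (max i.natAbs 1) := by
    apply Finset.sum_le_sum
    intro i _
    rw [habs i, mul_comm]
    apply mul_le_mul_of_nonneg_left _ (by positivity)
    rw [hgabs i]
    exact hgmono _ _ (le_max_left _ _)
  -- step 3: as a multiset sum
  have h2 : ∑ i ∈ w.support, (w i : ℝ) * G (max i.natAbs 1) =
      ((w.toMultiset.map fun h => max h.natAbs 1).map G).sum := by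
    rw [Multiset.map_map, msum_toMultiset]
    simp [Function.comp]
  -- bound on elements
  have hM1pos : 1 ≤ M1 := by
    obtain ⟨j, hj0, hjne⟩ := hne
    have hwj : w j ≠ 0 := by rw [hws]; omega
    have hjm : j ∈ mMultiset u := by
      rw [mMultiset, Finsupp.mem_toMultiset, Finsupp.mem_support_iff,
        Finsupp.erase_ne hj0]
      exact hwj
    have h2 := Multiset.le_sup (Multiset.mem_map_of_mem Int.natAbs hjm)
    exact le_trans (by omega) h2
  have hSbound : ∀ x ∈ w.toMultiset.map fun h => max h.natAbs 1, x ≤ M1 := by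
    intro x hx
    obtain ⟨h, hh, rfl⟩ := Multiset.mem_map.1 hx
    rw [Finsupp.mem_toMultiset, Finsupp.mem_support_iff] at hh
    rcases eq_or_ne h 0 with rfl | hne0
    · simpa using hM1pos
    · have hjm : h ∈ mMultiset u := by
        rw [mMultiset, Finsupp.mem_toMultiset, Finsupp.mem_support_iff,
          Finsupp.erase_ne hne0]
        exact hh
      have h2 := Multiset.le_sup (Multiset.mem_map_of_mem Int.natAbs hjm)
      exact max_le h2 hM1pos
  -- submultiset
  have hST : (w.toMultiset.map fun h => max h.natAbs 1) ≤ nhat (α + β) := by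
    apply Multiset.map_le_map
    rw [Multiset.le_iff_count]
    intro a
    rw [Finsupp.count_toMultiset, Finsupp.count_toMultiset, Finsupp.add_apply, hws]
    omega
  have h3 := key G (fun n => hg0 _) (fun a b h => hgmono a b h)
    (w.toMultiset.map fun h => max h.natAbs 1) (nhat (α + β)) hST M1 hSbound
  rw [h0]
  calc ∑ i ∈ w.support, g i * |(α i : ℝ) - (β i : ℝ)|
      ≤ ∑ i ∈ w.support, (w i : ℝ) * G (max i.natAbs 1) := h1
    _ = ((w.toMultiset.map fun h => max h.natAbs 1).map G).sum := h2
    _ ≤ 2 * G M1 + ((((nhat (α + β)).sort (· ≤ ·)).reverse.drop 2).map G).sum := h3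
    _ = _ := by rw [nhatList]
end

section
/- Fix 0 < θ < 1 and 0 < σ ≤ 1, set C_* := 7/(2 − 2^θ), define f_i(x) := −(σ/C_*) x ⟨i⟩^{θ/2} + ln(1 + x² ⟨i⟩²) for i ∈ ℤ and x ≥ 0, and set i_♯ := ( (24 C_*/(σθ)) ln(12 C_*/(σθ)) )^{2/θ}. Then for every finitely supported ℓ : ℤ → ℤ one has ∑_{i∈ℤ} f_i(|ℓ_i|) ≤ 18 i_♯ ln i_♯. -/
open scoped BigOperators ENNReal

lemma zbr_one_le (j : ℤ) : 1 ≤ zbr j := by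
  unfold zbr
  exact_mod_cast Nat.le_max_right j.natAbs 1

lemma abs_le_zbr (j : ℤ) : |(j : ℝ)| ≤ zbr j := by
  unfold zbr
  have h1 : ((j.natAbs : ℕ) : ℝ) = |(j:ℝ)| := by
    rw [Nat.cast_natAbs]
    push_cast
    rfl
  rw [← h1]
  exact_mod_cast Nat.le_max_left j.natAbs 1

lemma log_one_add_sq_le (x w : ℝ) (hx : 0 ≤ x) (hw : 0 ≤ w) :
    Real.log (1 + x ^ 2 * w ^ 2) ≤ 2 * Real.log (1 + x * w) := by
  have h : Real.log ((1 + x * w) ^ (2:ℕ)) = 2 * Real.log (1 + x * w) := by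
    rw [Real.log_pow]; norm_num
  rw [← h]
  apply Real.log_le_log (by positivity)
  nlinarith [mul_nonneg hx hw]

/-- Uniform per-term bound: `-ε x z^s + log(1+x²z²) ≤ 2 log(2z/ε)`. -/
lemma term_le (ε z s x : ℝ) (hε0 : 0 < ε) (hε1 : ε ≤ 1) (hz : 1 ≤ z)
    (hs0 : 0 ≤ s) (hs1 : s ≤ 1) (hx : 0 ≤ x) :
    -ε * x * z ^ s + Real.log (1 + x ^ 2 * z ^ 2) ≤ 2 * Real.log (2 * z / ε) := by
  have hz0 : (0:ℝ) < z := lt_of_lt_of_le one_pos hz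
  set a := ε * z ^ s with ha
  have hzs1 : 1 ≤ z ^ s := by
    calc (1:ℝ) = z ^ (0:ℝ) := (Real.rpow_zero z).symm
    _ ≤ z ^ s := Real.rpow_le_rpow_of_exponent_le hz hs0
  have hzsz : z ^ s ≤ z := by
    calc z ^ s ≤ z ^ (1:ℝ) := Real.rpow_le_rpow_of_exponent_le hz hs1
    _ = z := Real.rpow_one z
  have ha0 : 0 < a := mul_pos hε0 (lt_of_lt_of_le one_pos hzs1)
  have haz : a ≤ z := by
    calc a ≤ 1 * z ^ s := by rw [ha]; exact mul_le_mul_of_nonneg_right hε1 (by linarith)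
    _ = z ^ s := one_mul _
    _ ≤ z := hzsz
  have haε : ε ≤ a := by
    calc ε = ε * 1 := (mul_one ε).symm
    _ ≤ a := by rw [ha]; exact mul_le_mul_of_nonneg_left hzs1 hε0.le
  have hxz : 0 ≤ x * z := mul_nonneg hx hz0.le
  have h1 : Real.log (1 + x ^ 2 * z ^ 2) ≤ 2 * Real.log (1 + x * z) :=
    log_one_add_sq_le x z hx hz0.le
  have h2 : Real.log (1 + x * z) ≤ Real.log (2 * z / a) + (a / z / 2 + a * x / 2) - 1 := by
    have hpos : 0 < (1 + x * z) / (2 * z / a) := by positivity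
    have h := Real.log_le_sub_one_of_pos hpos
    rw [Real.log_div (by positivity) (by positivity)] at h
    have heq : (1 + x * z) / (2 * z / a) = a / z / 2 + a * x / 2 := by
      field_simp
    rw [heq] at h
    linarith
  have h3 : Real.log (2 * z / a) ≤ Real.log (2 * z / ε) := by
    apply Real.log_le_log (by positivity)
    rw [div_le_div_iff₀ ha0 hε0]
    nlinarith [mul_le_mul_of_nonneg_left haε (by linarith : (0:ℝ) ≤ 2 * z)]
  have hdiv : a / z ≤ 1 := (div_le_one hz0).mpr haz
  have hax : -ε * x * z ^ s = -(a * x) := by rw [ha]; ring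
  rw [hax]
  linarith

set_option maxHeartbeats 1000000 in
/-- Lemma `pajata`: with `C_* = 7/(2−2^θ)`,
`f_i(x) = −(σ/C_*) x ⟨i⟩^{θ/2} + ln(1+x²⟨i⟩²)` and
`i_♯ = ((24C_*/(σθ)) ln(12C_*/(σθ)))^{2/θ}`, for every finitely supported
`ℓ : ℤ → ℤ` one has `∑_i f_i(|ℓ_i|) ≤ 18 i_♯ ln i_♯`. -/
theorem small_divisor_counting (θ σ : ℝ) (hθ0 : 0 < θ) (hθ1 : θ < 1)
    (hσ0 : 0 < σ) (hσ1 : σ ≤ 1) (ℓ : ℤ →₀ ℤ) :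
    (∑ᶠ i : ℤ,
        (-(σ / (7 / (2 - (2 : ℝ) ^ θ))) * |(ℓ i : ℝ)| * zbr i ^ (θ / 2) +
          Real.log (1 + |(ℓ i : ℝ)| ^ 2 * zbr i ^ 2))) ≤
      18 * (((24 * (7 / (2 - (2 : ℝ) ^ θ)) / (σ * θ)) *
          Real.log (12 * (7 / (2 - (2 : ℝ) ^ θ)) / (σ * θ))) ^ (2 / θ)) *
        Real.log (((24 * (7 / (2 - (2 : ℝ) ^ θ)) / (σ * θ)) *
          Real.log (12 * (7 / (2 - (2 : ℝ) ^ θ)) / (σ * θ))) ^ (2 / θ)) := by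
  classical
  have h2θ : (2:ℝ) ^ θ < 2 := by
    calc (2:ℝ) ^ θ < 2 ^ (1:ℝ) := Real.rpow_lt_rpow_of_exponent_lt one_lt_two hθ1
    _ = 2 := Real.rpow_one 2
  have h2θ1 : (1:ℝ) ≤ 2 ^ θ := by
    calc (1:ℝ) = 2 ^ (0:ℝ) := (Real.rpow_zero 2).symm
    _ ≤ 2 ^ θ := Real.rpow_le_rpow_of_exponent_le one_le_two hθ0.le
  have hc0 : 0 < 2 - (2:ℝ) ^ θ := by linarith
  obtain ⟨C, hCdef⟩ : ∃ x : ℝ, x = 7 / (2 - (2:ℝ) ^ θ) := ⟨_, rfl⟩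
  rw [← hCdef]
  have hC7 : 7 ≤ C := by
    rw [hCdef, le_div_iff₀ hc0]; linarith
  have hC0 : 0 < C := by linarith
  obtain ⟨ε, hεdef⟩ : ∃ x : ℝ, x = σ / C := ⟨_, rfl⟩
  rw [← hεdef]
  have hε0 : 0 < ε := hεdef ▸ div_pos hσ0 hC0
  have hε7 : ε ≤ 1 / 7 := by
    rw [hεdef, div_le_div_iff₀ hC0 (by norm_num : (0:ℝ) < 7)]
    linarith
  have hσθ : 0 < σ * θ := mul_pos hσ0 hθ0
  obtain ⟨D, hDdef⟩ : ∃ x : ℝ, x = 12 * C / (σ * θ) := ⟨_, rfl⟩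
  rw [← hDdef]
  have hεDθ : ε * D * θ = 12 := by
    rw [hεdef, hDdef]
    field_simp
  have hεθ : 0 < ε * θ := mul_pos hε0 hθ0
  have hD0 : 0 < D := by rw [hDdef]; positivity
  have hD12 : D = 12 / (ε * θ) := by
    rw [eq_div_iff (ne_of_gt hεθ)]
    nlinarith [hεDθ]
  have hD84 : 84 ≤ D := by
    rw [hDdef, le_div_iff₀ hσθ]
    nlinarith [mul_le_one₀ hσ1 hθ0.le hθ1.le]
  have hlogD : 4 ≤ Real.log D := by
    rw [Real.le_log_iff_exp_le (by linarith)]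
    have h := Real.exp_one_lt_d9
    have h4 : Real.exp 4 = Real.exp 1 ^ (4:ℕ) := by
      rw [← Real.exp_nat_mul]; norm_num
    have hle : Real.exp 1 ^ (4:ℕ) ≤ (2.7182818286:ℝ) ^ (4:ℕ) :=
      pow_le_pow_left₀ (Real.exp_pos 1).le h.le 4
    have h84 : (2.7182818286:ℝ) ^ (4:ℕ) ≤ 84 := by norm_num
    rw [h4]
    linarith
  obtain ⟨L, hLdef⟩ : ∃ x : ℝ, x = Real.log D := ⟨_, rfl⟩
  rw [← hLdef]
  have hL4 : 4 ≤ L := hLdef ▸ hlogD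
  have hL0 : 0 ≤ L := by linarith
  rw [show 24 * C / (σ * θ) = 2 * D from by rw [hDdef]; ring]
  obtain ⟨B, hBdef⟩ : ∃ x : ℝ, x = 2 * D * L := ⟨_, rfl⟩
  rw [← hBdef]
  have hB0 : 0 < B := by
    have : (0:ℝ) < L := by linarith
    rw [hBdef]; positivity
  have h8DL : D * 4 ≤ D * L := mul_le_mul_of_nonneg_left hL4 hD0.le
  have hDB : D ≤ B := by rw [hBdef]; nlinarith
  have hB1 : 1 ≤ B := by linarith
  have hεθB : ε * θ * B = 24 * L := by
    rw [hBdef]; linear_combination (2 * L) * hεDθ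
  obtain ⟨I, hIdef⟩ : ∃ x : ℝ, x = B ^ ((2:ℝ) / θ) := ⟨_, rfl⟩
  rw [← hIdef]
  have hI0 : 0 < I := hIdef ▸ Real.rpow_pos_of_pos hB0 _
  have hBI : B ≤ I := by
    rw [hIdef]
    calc B = B ^ (1:ℝ) := (Real.rpow_one B).symm
    _ ≤ B ^ ((2:ℝ)/θ) := by
        apply Real.rpow_le_rpow_of_exponent_le hB1
        rw [le_div_iff₀ hθ0]; linarith
  have hI1 : 1 ≤ I := le_trans hB1 hBI
  have hIθ : I ^ (θ/2) = B := by
    rw [hIdef, ← Real.rpow_mul hB0.le]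
    rw [show (2:ℝ)/θ * (θ/2) = 1 from by field_simp, Real.rpow_one]
  -- Key inequality: for w ≥ I, 2 log (2w) ≤ ε w^(θ/2)
  have hkey : ∀ w : ℝ, I ≤ w → 2 * Real.log (2 * w) ≤ ε * w ^ (θ/2) := by
    intro w hw
    have hw1 : 1 ≤ w := le_trans hI1 hw
    have hw0 : (0:ℝ) < w := by linarith
    have hu0 : 0 < w ^ (θ/2) := Real.rpow_pos_of_pos hw0 _
    have hBu : B ≤ w ^ (θ/2) := by
      rw [← hIθ]
      exact Real.rpow_le_rpow (by linarith) hw (by positivity)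
    have hlogw : θ * Real.log w = 2 * Real.log (w ^ (θ/2)) := by
      rw [Real.log_rpow hw0]; ring
    have h5 : Real.log (w ^ (θ/2)) ≤ Real.log (8/(ε*θ)) + w ^ (θ/2) * (ε*θ/8) - 1 := by
      have hpos : 0 < w ^ (θ/2) / (8/(ε*θ)) := by positivity
      have h := Real.log_le_sub_one_of_pos hpos
      rw [Real.log_div (ne_of_gt hu0) (by positivity)] at h
      have heq : w ^ (θ/2) / (8/(ε*θ)) = w ^ (θ/2) * (ε*θ/8) := by
        field_simp
      rw [heq] at h
      linarith
    have hMD : Real.log (8/(ε*θ)) ≤ L := by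
      rw [hLdef]
      apply Real.log_le_log (by positivity)
      rw [hD12, div_le_div_iff₀ hεθ hεθ]
      nlinarith
    have p1 : 4 * Real.log (w ^ (θ/2)) ≤ 4*L + w ^ (θ/2) *(ε*θ)/2 - 4 := by linarith
    have p2 : ε*θ*B ≤ ε*θ* w ^ (θ/2) := mul_le_mul_of_nonneg_left hBu hεθ.le
    have p4 : θ * Real.log 2 ≤ 1 :=
      mul_le_one₀ hθ1.le (Real.log_nonneg one_le_two) (by
        linarith [Real.log_le_sub_one_of_pos (by norm_num : (0:ℝ) < 2)])
    have hlog2w : Real.log (2*w) = Real.log 2 + Real.log w :=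
      Real.log_mul two_ne_zero (ne_of_gt hw0)
    have hmul : θ * (2 * Real.log (2*w)) ≤ θ * (ε * w ^ (θ/2)) := by
      rw [hlog2w]
      linarith [p1, p2, p4, hεθB, hL4, hlogw]
    exact le_of_mul_le_mul_left hmul hθ0
  -- Negativity for large indices
  have hneg : ∀ i : ℤ, I ≤ zbr i → ∀ x : ℝ, 1 ≤ x →
      -ε * x * zbr i ^ (θ/2) + Real.log (1 + x^2 * zbr i^2) ≤ 0 := by
    intro i hzi x hx
    have hw1 : 1 ≤ zbr i := zbr_one_le i
    have hw0 : (0:ℝ) < zbr i := by linarith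
    have hk := hkey (zbr i) hzi
    have hBu : B ≤ zbr i ^ (θ/2) := by
      rw [← hIθ]
      exact Real.rpow_le_rpow (by linarith) hzi (by positivity)
    have ha2 : 2 ≤ ε * zbr i ^ (θ/2) := by
      have h6 : 0 ≤ ε*B*(1-θ) := mul_nonneg (mul_pos hε0 hB0).le (by linarith)
      have h7 : ε * B ≤ ε * zbr i ^ (θ/2) := mul_le_mul_of_nonneg_left hBu hε0.le
      linarith [h6, h7, hεθB, hL4]
    have hxw : 1 ≤ x * zbr i := by
      have hm := mul_le_mul hx hw1 zero_le_one (by linarith : (0:ℝ) ≤ x)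
      linarith [hm]
    have l1 : Real.log (1 + x^2 * zbr i^2) ≤ 2 * Real.log (1 + x * zbr i) :=
      log_one_add_sq_le x (zbr i) (by linarith) hw0.le
    have l2 : Real.log (1 + x * zbr i) ≤ Real.log (2*(x * zbr i)) :=
      Real.log_le_log (by positivity) (by linarith)
    have l3 : Real.log (2*(x * zbr i)) = Real.log (2 * zbr i) + Real.log x := by
      rw [show 2*(x * zbr i) = (2 * zbr i) * x from by ring,
        Real.log_mul (by positivity) (by positivity)]
    have l4 : Real.log x ≤ x - 1 := Real.log_le_sub_one_of_pos (by linarith)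
    have hprod : 0 ≤ (ε * zbr i ^ (θ/2) - 2) * (x - 1) :=
      mul_nonneg (by linarith) (by linarith)
    linarith [l1, l2, l3, l4, hk, hprod]
  -- bound for small indices
  have h2εI : 2/ε ≤ I := by
    have h : 2/ε ≤ D := by
      rw [hD12, div_le_div_iff₀ hε0 hεθ]
      nlinarith
    linarith
  -- rewrite the finsum as a finite sum over the support
  set F : ℤ → ℝ := fun i =>
    -ε * |(ℓ i : ℝ)| * zbr i ^ (θ / 2) +
      Real.log (1 + |(ℓ i : ℝ)| ^ 2 * zbr i ^ 2) with hFdef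
  have hsupp : Function.support F ⊆ ↑ℓ.support := by
    intro i hi
    simp only [Function.mem_support] at hi
    simp only [Finset.mem_coe, Finsupp.mem_support_iff]
    intro h0
    apply hi
    simp [hFdef, h0]
  rw [finsum_eq_finset_sum_of_support_subset F hsupp]
  set P : ℤ → Prop := fun i => zbr i ≤ I with hPdef
  have hBnd : ∀ i ∈ ℓ.support.filter P, F i ≤ 6 * Real.log I := by
    intro i hi
    have hzi : zbr i ≤ I := (Finset.mem_filter.mp hi).2
    have hz1 := zbr_one_le i
    have h1 : F i ≤ 2 * Real.log (2 * zbr i / ε) := by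
      simp only [hFdef]
      exact term_le ε (zbr i) (θ/2) _ hε0 (by linarith) hz1 (by linarith) (by linarith)
        (abs_nonneg _)
    have hI3 : I * I ≤ I ^ (3:ℕ) := by
      have hh : 0 ≤ I * I * (I - 1) :=
        mul_nonneg (mul_nonneg hI0.le hI0.le) (by linarith)
      nlinarith [hh]
    have h3 : 2 * zbr i / ε ≤ I ^ (3:ℕ) := by
      rw [show 2 * zbr i / ε = (2/ε) * zbr i from by ring]
      calc (2/ε) * zbr i ≤ I * I := mul_le_mul h2εI hzi (by linarith) (by linarith)
      _ ≤ I ^ (3:ℕ) := hI3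
    have h4 : Real.log (2 * zbr i / ε) ≤ Real.log (I ^ (3:ℕ)) :=
      Real.log_le_log (div_pos (by linarith) hε0) h3
    rw [Real.log_pow] at h4
    push_cast at h4
    calc F i ≤ 2 * Real.log (2 * zbr i / ε) := h1
    _ ≤ 6 * Real.log I := by linarith [h4]
  have hA : ∑ i ∈ ℓ.support.filter P, F i ≤
      (ℓ.support.filter P).card • (6 * Real.log I) :=
    Finset.sum_le_card_nsmul _ _ _ hBnd
  have hBneg : ∑ i ∈ ℓ.support.filter (fun i => ¬ P i), F i ≤ 0 := by
    apply Finset.sum_nonpos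
    intro i hi
    obtain ⟨hiS, hnP⟩ := Finset.mem_filter.mp hi
    have hzi : I ≤ zbr i := by
      simp only [hPdef, not_le] at hnP; linarith
    have hx : 1 ≤ |(ℓ i : ℝ)| := by
      have h0 : ℓ i ≠ 0 := Finsupp.mem_support_iff.mp hiS
      have h1 := Int.one_le_abs h0
      calc (1:ℝ) = ((1:ℤ):ℝ) := by norm_num
      _ ≤ ((|ℓ i| : ℤ) : ℝ) := by exact_mod_cast h1
      _ = |(ℓ i : ℝ)| := by push_cast; ring
    simpa only [hFdef] using hneg i hzi |(ℓ i : ℝ)| hx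
  obtain ⟨N, hNdef⟩ : ∃ x : ℤ, x = ⌊I⌋ := ⟨_, rfl⟩
  have hN1 : 1 ≤ N := hNdef ▸ Int.le_floor.mpr (by exact_mod_cast hI1)
  have hsub : ℓ.support.filter P ⊆ Finset.Icc (-N) N := by
    intro i hi
    have hzi : zbr i ≤ I := (Finset.mem_filter.mp hi).2
    rw [Finset.mem_Icc, hNdef]
    constructor
    · rw [neg_le]
      exact Int.le_floor.mpr (by push_cast; linarith [neg_le_abs ((i:ℝ)), abs_le_zbr i])
    · exact Int.le_floor.mpr (by linarith [le_abs_self ((i:ℝ)), abs_le_zbr i])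
  have hcard : (((ℓ.support.filter P).card : ℕ) : ℝ) ≤ 3 * I := by
    have h1 := Finset.card_le_card hsub
    rw [Int.card_Icc, show N + 1 - -N = 2*N + 1 from by ring] at h1
    have hnn : (0:ℤ) ≤ 2*N+1 := by linarith
    have hcast : ((2*N+1).toNat : ℝ) = (((2*N+1).toNat : ℤ) : ℝ) := by
      push_cast
      ring
    have h3 : ((2*N+1).toNat : ℝ) = 2*(N:ℝ) + 1 := by
      rw [hcast, Int.toNat_of_nonneg hnn]
      push_cast
      ring
    have hNI : (N:ℝ) ≤ I := hNdef ▸ Int.floor_le I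
    have h5 : (((ℓ.support.filter P).card : ℕ) : ℝ) ≤ ((2*N+1).toNat : ℝ) := by
      exact_mod_cast h1
    rw [h3] at h5
    linarith
  have hlogI : 0 ≤ Real.log I := Real.log_nonneg hI1
  calc ∑ i ∈ ℓ.support, F i
      = ∑ i ∈ ℓ.support.filter P, F i + ∑ i ∈ ℓ.support.filter (fun i => ¬ P i), F i :=
        (Finset.sum_filter_add_sum_filter_not _ _ _).symm
    _ ≤ (ℓ.support.filter P).card • (6 * Real.log I) + 0 := add_le_add hA hBneg
    _ = ((ℓ.support.filter P).card : ℝ) * (6 * Real.log I) := by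
        rw [add_zero, nsmul_eq_mul]
    _ ≤ (3 * I) * (6 * Real.log I) := mul_le_mul_of_nonneg_right hcard (by linarith)
    _ = 18 * I * Real.log I := by ring
end
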